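/- Suppose A, B ∈ GL₄(ℂ) satisfy B = HAΛ with H = diag(1,1,1,-1), Λ = diag(ρ,ρ²,ρ²,ρ²), ρ = e^{2πi/3}, the columns of A are x,b,c,d, and AᵀHx = (Δ,0,0,0)ᵀ with Δ = xᵀHx ≠ 0. If integer vectors n, m ∈ ℤ⁴ and ν ∈ ℂ, ν ≠ 0, satisfy nᵀA + mᵀB = ν(1,0,0,0), then x = ξ(Hn + ρ²m) where ξ = ν / (n·Hn - m·n + m·Hm). -/

import Mathlib

open Matrix Complex

noncomputable def Hm : Matrix (Fin 4) (Fin 4) ℂ := Matrix.diagonal ![1, 1, 1, -1]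

noncomputable def ρ : ℂ := Complex.exp (2 * Real.pi * Complex.I / 3)

noncomputable def Λm : Matrix (Fin 4) (Fin 4) ℂ := Matrix.diagonal ![ρ, ρ ^ 2, ρ ^ 2, ρ ^ 2]

lemma rho_cube : ρ ^ 3 = 1 := by
  have h : ((3 : ℕ) : ℂ) * (2 * Real.pi * Complex.I / 3) = 2 * Real.pi * Complex.I := by
    push_cast; ring
  rw [ρ, ← Complex.exp_nat_mul, h, Complex.exp_two_pi_mul_I]

lemma rho_ne_one : ρ ≠ 1 := by
  have h : ρ = Complex.exp ((2 * Real.pi / 3 : ℝ) * Complex.I) := by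
    rw [ρ]; congr 1; push_cast; ring
  intro hc
  have him : ρ.im = Real.sin (2 * Real.pi / 3) := by
    rw [h, Complex.exp_ofReal_mul_I_im]
  have hpos : 0 < Real.sin (2 * Real.pi / 3) :=
    Real.sin_pos_of_pos_of_lt_pi (by positivity) (by nlinarith [Real.pi_pos])
  rw [hc] at him
  simp only [Complex.one_im] at him
  linarith [him ▸ hpos]

lemma rho_sum : 1 + ρ + ρ ^ 2 = 0 := by
  have h : (ρ - 1) * (1 + ρ + ρ ^ 2) = 0 := by linear_combination rho_cube
  rcases mul_eq_zero.mp h with h1 | h2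
  · exact absurd (sub_eq_zero.mp h1) rho_ne_one
  · exact h2

lemma HH : Hm * Hm = 1 := by
  rw [Hm, Matrix.diagonal_mul_diagonal]
  ext i j
  fin_cases i <;> fin_cases j <;> simp [Matrix.diagonal, Matrix.one_apply]

lemma detHm : IsUnit (Hm).det := by
  rw [Hm, Matrix.det_diagonal, Fin.prod_univ_four]
  norm_num
  exact ⟨one_ne_zero, neg_ne_zero.mpr one_ne_zero⟩

theorem stmt2 (A B : Matrix (Fin 4) (Fin 4) ℂ)
    (hA : IsUnit A.det) (hB : IsUnit B.det)
    (hBA : B = Hm * A * Λm)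
    (x : Fin 4 → ℂ) (hx : ∀ i, A i 0 = x i)
    (Δ : ℂ) (hΔ : Δ = x ⬝ᵥ Hm.mulVec x) (hΔ0 : Δ ≠ 0)
    (hinv : ∀ μ, Hm.mulVec x μ = A⁻¹ 0 μ * Δ)
    (n m : Fin 4 → ℤ) (ν : ℂ) (hν : ν ≠ 0)
    (nC mC : Fin 4 → ℂ) (hnC : ∀ i, nC i = (n i : ℂ)) (hmC : ∀ i, mC i = (m i : ℂ))
    (hES : ∀ j, (Matrix.vecMul nC A + Matrix.vecMul mC B) j
        = ν * (if j = 0 then 1 else 0))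
    (hden : nC ⬝ᵥ Hm.mulVec nC - mC ⬝ᵥ nC + mC ⬝ᵥ Hm.mulVec mC ≠ 0) :
    x = (ν / (nC ⬝ᵥ Hm.mulVec nC - mC ⬝ᵥ nC + mC ⬝ᵥ Hm.mulVec mC)) •
        (Hm.mulVec nC + ρ ^ 2 • mC) := by
  have hsym : ∀ v : Fin 4 → ℂ, Hm.mulVec v = Matrix.vecMul v Hm := by
    intro v; funext i
    simp [Hm, Matrix.mulVec_diagonal, Matrix.vecMul_diagonal, mul_comm]
  have hHA : IsUnit (Hm * A).det := by
    rw [Matrix.det_mul]; exact detHm.mul hA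
  set β := mC ⬝ᵥ Hm.mulVec x with hβ
  set α := nC ⬝ᵥ x with hα
  set s := ν + (ρ ^ 2 - ρ) * β with hs
  -- column 0 of Hm * A is Hm.mulVec x
  have hcol : ∀ i, (Hm * A) i 0 = Hm.mulVec x i := by
    intro i
    simp [Matrix.mul_apply, Matrix.mulVec, dotProduct, hx]
  have hr0 : Matrix.vecMul mC (Hm * A) 0 = β := by
    rw [hβ]
    simp [Matrix.vecMul, dotProduct, hcol]
  -- rewritten elementary symmetry condition
  have hnA : ∀ j, Matrix.vecMul nC A j
      = ν * (if j = 0 then 1 else 0)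
        - Matrix.vecMul (Matrix.vecMul mC (Hm * A)) Λm j := by
    intro j
    have h := hES j
    rw [hBA, ← Matrix.vecMul_vecMul] at h
    simp only [Pi.add_apply] at h
    linear_combination h
  -- key row identity for Hn + ρ²m
  have h1 : ∀ j, Matrix.vecMul (Hm.mulVec nC + ρ ^ 2 • mC) (Hm * A) j
      = s * (if j = 0 then 1 else 0) := by
    intro j
    rw [Matrix.add_vecMul, Matrix.smul_vecMul, hsym, Matrix.vecMul_vecMul,
      ← Matrix.mul_assoc, HH, Matrix.one_mul]
    simp only [Pi.add_apply, Pi.smul_apply, smul_eq_mul]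
    rw [hnA j]
    fin_cases j <;>
      simp [Λm, Matrix.vecMul_diagonal, hr0, hs] <;> ring
  -- row identity for x
  have h2 : ∀ j, Matrix.vecMul x (Hm * A) j = Δ * (if j = 0 then 1 else 0) := by
    intro j
    have hAi : A⁻¹ * A = 1 := Matrix.nonsing_inv_mul A hA
    have : Matrix.vecMul x (Hm * A) j = ∑ μ, Hm.mulVec x μ * A μ j := by
      rw [← Matrix.vecMul_vecMul, ← hsym]
      simp [Matrix.vecMul, dotProduct]
    rw [this]
    have h3 : ∑ μ, Hm.mulVec x μ * A μ j = Δ * (A⁻¹ * A) 0 j := by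
      rw [Matrix.mul_apply, Finset.mul_sum]
      exact Finset.sum_congr rfl fun μ _ => by rw [hinv μ]; ring
    rw [h3, hAi, Matrix.one_apply]
    congr 1
    by_cases h : j = 0 <;> simp [h, eq_comm]
  -- deduce Hn + ρ²m = (s/Δ) • x
  have hy : Hm.mulVec nC + ρ ^ 2 • mC = (s / Δ) • x := by
    have hxy : Matrix.vecMul (Hm.mulVec nC + ρ ^ 2 • mC) (Hm * A)
        = Matrix.vecMul ((s / Δ) • x) (Hm * A) := by
      funext j
      rw [h1 j, Matrix.smul_vecMul]
      simp only [Pi.smul_apply, smul_eq_mul]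
      rw [h2 j]
      field_simp
    have h4 := congrArg (fun v => Matrix.vecMul v (Hm * A)⁻¹) hxy
    simpa [Matrix.vecMul_vecMul, Matrix.mul_nonsing_inv _ hHA] using h4
  -- the j = 0 component of the symmetry condition
  have hE0 : α + ρ * β = ν := by
    have h := hnA 0
    have hl : Matrix.vecMul nC A 0 = α := by
      rw [hα]; simp [Matrix.vecMul, dotProduct, hx]
    rw [hl] at h
    simp only [Λm, Matrix.vecMul_diagonal] at h
    rw [hr0] at h
    simp only [Matrix.cons_val_zero] at h
    norm_num at h
    linear_combination h
  -- scalar consequences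
  have hHn : Hm.mulVec nC = (s / Δ) • x - ρ ^ 2 • mC := by
    rw [← hy]; abel
  have e1 : nC ⬝ᵥ Hm.mulVec nC = (s / Δ) * α - ρ ^ 2 * (mC ⬝ᵥ nC) := by
    rw [hHn, dotProduct_sub, dotProduct_smul, dotProduct_smul, smul_eq_mul,
      smul_eq_mul, ← hα, dotProduct_comm]
  have hnback : nC = (s / Δ) • Hm.mulVec x - ρ ^ 2 • Hm.mulVec mC := by
    have h5 : nC = Hm.mulVec (Hm.mulVec nC) := by
      rw [Matrix.mulVec_mulVec, HH, Matrix.one_mulVec]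
    rw [h5, hHn, Matrix.mulVec_sub, Matrix.mulVec_smul, Matrix.mulVec_smul]
  have e2 : mC ⬝ᵥ nC = (s / Δ) * β - ρ ^ 2 * (mC ⬝ᵥ Hm.mulVec mC) := by
    rw [hnback, dotProduct_sub, dotProduct_smul, dotProduct_smul, smul_eq_mul,
      smul_eq_mul, ← hβ]
  have hD : nC ⬝ᵥ Hm.mulVec nC - mC ⬝ᵥ nC + mC ⬝ᵥ Hm.mulVec mC = (s / Δ) * ν := by
    linear_combination e1 + ρ * e2 + (s / Δ) * hE0 - (mC ⬝ᵥ nC) * rho_sum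
      - (mC ⬝ᵥ Hm.mulVec mC) * rho_cube
  have hc0 : s / Δ ≠ 0 := by
    intro h
    rw [h, zero_mul] at hD
    exact hden hD
  rw [hy, hD, smul_smul]
  have hs0 : s ≠ 0 := fun h => hc0 (by rw [h, zero_div])
  have hone : ν / (s / Δ * ν) * (s / Δ) = 1 := by
    field_simp
  rw [hone, one_smul]
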